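/- Products of lattices give lattices: there exist constants C, C' > 0 (depending only on N and the chosen homogeneous distance) such that for every δ > 0, R > 1, every (δ², R²)-lattice (x_j)_{j∈J} in F and every (δ, R)-lattice (ζ_{j'})_{j'∈J'} in E, the family (ζ_{j'}, x_j)_{(j,j')∈J×J'} is a (Cδ, C'R)-lattice in N for the homogeneous distance. -/
import Mathlib


/-- The product on `N = E × F` induced by the imaginary part of a Hermitian map `Φ`. -/
noncomputable def heisMul {E F : Type*} [AddCommGroup E] [AddCommGroup F] [Module ℝ F]
    (Φim : E → E → F) (a b : E × F) : E × F :=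
  (a.1 + b.1, a.2 + b.2 + (2 : ℝ) • Φim a.1 b.1)

/-- `(x_k)` is a `(δ,R)`-lattice for the distance `d` if the balls `B(x_k, δ)` are pairwise
disjoint while the balls `B(x_k, Rδ)` cover the space. -/
def IsLattice {X ι : Type*} (d : X → X → ℝ) (x : ι → X) (δ R : ℝ) : Prop :=
  Pairwise (fun i j => Disjoint {y | d (x i) y < δ} {y | d (x j) y < δ}) ∧
  ∀ y : X, ∃ i, d (x i) y < R * δ

/-- Midpoint trick: if two points are at distance `< 2r`, the midpoint lies in both balls. -/
lemma midpoint_mem_balls {V : Type*} [NormedAddCommGroup V] [NormedSpace ℝ V] (a b : V)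
    (r : ℝ) (h : ‖b - a‖ < 2 * r) :
    dist a (a + (2⁻¹ : ℝ) • (b - a)) < r ∧ dist b (a + (2⁻¹ : ℝ) • (b - a)) < r := by
  have h1 : a - (a + (2⁻¹ : ℝ) • (b - a)) = (-(2⁻¹ : ℝ)) • (b - a) := by module
  have h2 : b - (a + (2⁻¹ : ℝ) • (b - a)) = ((2⁻¹ : ℝ)) • (b - a) := by module
  constructor
  · rw [dist_eq_norm, h1, norm_smul]
    simp only [norm_neg, norm_inv, Real.norm_ofNat]
    linarith [norm_nonneg (b - a)]
  · rw [dist_eq_norm, h2, norm_smul]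
    simp only [norm_inv, Real.norm_ofNat]
    linarith [norm_nonneg (b - a)]

/-- Products of lattices give lattices: there are `C, C' > 0` such that for every `δ > 0`,
`R > 1`, every `(δ², R²)`-lattice `(x_j)` in `F` and every `(δ, R)`-lattice `(ζ_{j'})` in `E`,
the family `(ζ_{j'}, x_j)` is a `(Cδ, C'R)`-lattice in `N = E × F` for the homogeneous
left-invariant distance `d`. -/
theorem stmt_14 {E F : Type*} [NormedAddCommGroup E] [InnerProductSpace ℂ E]
    [FiniteDimensional ℂ E] [NormedAddCommGroup F] [InnerProductSpace ℝ F]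
    [FiniteDimensional ℝ F]
    (Φim : E → E → F) (d : (E × F) → (E × F) → ℝ)
    (hd_self : ∀ a, d a a = 0)
    (hd_pos : ∀ a b, a ≠ b → 0 < d a b)
    (hd_symm : ∀ a b, d a b = d b a)
    (hd_tri : ∀ a b c, d a c ≤ d a b + d b c)
    (hd_cont : Continuous fun p : (E × F) × (E × F) => d p.1 p.2)
    (hd_left : ∀ g a b, d (heisMul Φim g a) (heisMul Φim g b) = d a b)
    (hd_hom : ∀ t : ℝ, 0 < t → ∀ (ζ : E) (x : F) (ζ' : E) (x' : F),
      d ((t : ℂ) • ζ, (t ^ 2) • x) ((t : ℂ) • ζ', (t ^ 2) • x') = t * d (ζ, x) (ζ', x')) :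
    ∃ C > (0 : ℝ), ∃ C' > (0 : ℝ), ∀ (δ R : ℝ), 0 < δ → 1 < R →
      ∀ {J J' : Type*} (xj : J → F) (ζj : J' → E),
        IsLattice (fun a b : F => dist a b) xj (δ ^ 2) (R ^ 2) →
        IsLattice (fun a b : E => dist a b) ζj δ R →
        IsLattice d (fun p : J × J' => (ζj p.2, xj p.1)) (C * δ) (C' * R) := by
  classical
  -- the homogeneous gauge
  set ρ : E × F → ℝ := fun p => ‖p.1‖ + Real.sqrt ‖p.2‖ with hρdef
  have hρnn : ∀ p, 0 ≤ ρ p := fun p => add_nonneg (norm_nonneg _) (Real.sqrt_nonneg _)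
  have hρ0 : ∀ p : E × F, ρ p = 0 → p = 0 := by
    intro p hp
    have h1 : ‖p.1‖ = 0 := by
      have := Real.sqrt_nonneg ‖p.2‖; have := norm_nonneg p.1
      simp only [hρdef] at hp; linarith
    have h2 : Real.sqrt ‖p.2‖ = 0 := by
      simp only [hρdef] at hp; linarith [norm_nonneg p.1]
    have h2' : ‖p.2‖ = 0 := by
      have := Real.sqrt_eq_zero (norm_nonneg p.2) |>.mp h2
      exact this
    have : p.1 = 0 := norm_eq_zero.mp h1
    have : p.2 = 0 := norm_eq_zero.mp h2'
    exact Prod.ext ‹p.1 = 0› ‹p.2 = 0›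
  -- homogeneity of `d 0 ·`
  have key : ∀ t : ℝ, 0 < t → ∀ q : E × F,
      d 0 ((t : ℂ) • q.1, (t ^ 2) • q.2) = t * d 0 q := by
    intro t ht q
    have h := hd_hom t ht 0 0 q.1 q.2
    simp only [smul_zero, Prod.mk_zero_zero] at h
    simpa using h
  -- the rescaled point
  have unit : ∀ p : E × F, p ≠ 0 →
      ρ (((ρ p : ℝ) : ℂ)⁻¹ • p.1, ((ρ p) ^ 2)⁻¹ • p.2) = 1 ∧
      d 0 p = ρ p * d 0 (((ρ p : ℝ) : ℂ)⁻¹ • p.1, ((ρ p) ^ 2)⁻¹ • p.2) := by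
    intro p hp
    have ht : 0 < ρ p := lt_of_le_of_ne (hρnn p) (fun h => hp (hρ0 p h.symm))
    have htne : (ρ p : ℝ) ≠ 0 := ne_of_gt ht
    have htne' : ((ρ p : ℝ) : ℂ) ≠ 0 := by exact_mod_cast htne
    have ht2ne : ((ρ p) ^ 2 : ℝ) ≠ 0 := pow_ne_zero _ htne
    constructor
    · have e1 : ‖(((ρ p : ℝ) : ℂ))⁻¹ • p.1‖ = (ρ p)⁻¹ * ‖p.1‖ := by
        rw [norm_smul, norm_inv]
        congr 1
        rw [Complex.norm_real, Real.norm_eq_abs, abs_of_pos ht]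
      have e2 : Real.sqrt ‖((ρ p) ^ 2)⁻¹ • p.2‖ = (ρ p)⁻¹ * Real.sqrt ‖p.2‖ := by
        rw [norm_smul, Real.norm_eq_abs, abs_of_pos (by positivity : (0:ℝ) < ((ρ p)^2)⁻¹)]
        rw [show ((ρ p) ^ 2)⁻¹ = ((ρ p)⁻¹) ^ 2 by rw [inv_pow]]
        rw [Real.sqrt_mul (by positivity), Real.sqrt_sq (by positivity)]
      simp only [hρdef]
      simp only [hρdef] at e1 e2
      rw [e1, e2, ← mul_add, inv_mul_cancel₀]
      exact htne
    · have h := key (ρ p) ht (((ρ p : ℝ) : ℂ)⁻¹ • p.1, ((ρ p) ^ 2)⁻¹ • p.2)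
      have e1 : ((ρ p : ℝ) : ℂ) • (((ρ p : ℝ) : ℂ)⁻¹ • p.1) = p.1 := smul_inv_smul₀ htne' _
      have e2 : ((ρ p) ^ 2) • (((ρ p) ^ 2)⁻¹ • p.2) = p.2 := smul_inv_smul₀ ht2ne _
      simp only [e1, e2] at h
      rw [← h]
  -- comparison constants
  obtain ⟨c₁, hc₁, c₂, hc₂, hlow, hupp⟩ :
      ∃ c₁ > (0 : ℝ), ∃ c₂ > (0 : ℝ),
        (∀ p : E × F, c₁ * ρ p ≤ d 0 p) ∧ (∀ p : E × F, d 0 p ≤ c₂ * ρ p) := by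
    set S : Set (E × F) := {p | ρ p = 1} with hSdef
    have hρcont : Continuous ρ := by
      exact (continuous_norm.comp continuous_fst).add
        (Real.continuous_sqrt.comp (continuous_norm.comp continuous_snd))
    have hd0cont : Continuous fun p : E × F => d 0 p :=
      hd_cont.comp (continuous_const.prodMk continuous_id)
    by_cases hne : S.Nonempty
    · have hScl : IsClosed S := isClosed_eq hρcont continuous_const
      have hSbd : Bornology.IsBounded S := by
        apply (Metric.isBounded_closedBall (x := (0 : E × F)) (r := 1)).subset
        intro p hp
        simp only [hSdef, Set.mem_setOf_eq, hρdef] at hp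
        have h1 : ‖p.1‖ ≤ 1 := by linarith [Real.sqrt_nonneg ‖p.2‖]
        have h2 : ‖p.2‖ ≤ 1 := by
          have hs : Real.sqrt ‖p.2‖ ≤ 1 := by linarith [norm_nonneg p.1]
          nlinarith [Real.sq_sqrt (norm_nonneg p.2), Real.sqrt_nonneg ‖p.2‖]
        simp only [Metric.mem_closedBall, dist_zero_right, Prod.norm_def]
        exact max_le h1 h2
      have hScp : IsCompact S := Metric.isCompact_of_isClosed_isBounded hScl hSbd
      obtain ⟨pm, hpmS, hpm⟩ := hScp.exists_isMinOn hne hd0cont.continuousOn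
      obtain ⟨pM, hpMS, hpM⟩ := hScp.exists_isMaxOn hne hd0cont.continuousOn
      have hpmne : (0 : E × F) ≠ pm := by
        intro h
        have : ρ pm = 1 := hpmS
        rw [← h] at this
        simp [hρdef] at this
      refine ⟨d 0 pm, hd_pos 0 pm hpmne, d 0 pM, lt_of_lt_of_le (hd_pos 0 pm hpmne)
        (hpm hpMS), ?_, ?_⟩ <;> intro p
      · by_cases hp : p = 0
        · subst hp
          simp only [hρdef, norm_zero, Real.sqrt_zero, add_zero, Prod.fst_zero, Prod.snd_zero,
            norm_zero, mul_zero]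
          rw [hd_self]
        · obtain ⟨hq1, hq2⟩ := unit p hp
          have ht : 0 < ρ p := lt_of_le_of_ne (hρnn p) (fun h => hp (hρ0 p h.symm))
          have hmem : (((ρ p : ℝ) : ℂ)⁻¹ • p.1, ((ρ p) ^ 2)⁻¹ • p.2) ∈ S := hq1
          have hle : d 0 pm ≤ d 0 (((ρ p : ℝ) : ℂ)⁻¹ • p.1, ((ρ p) ^ 2)⁻¹ • p.2) := hpm hmem
          rw [hq2, mul_comm (ρ p)]
          exact mul_le_mul_of_nonneg_right hle ht.le
      · by_cases hp : p = 0
        · subst hp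
          simp only [hρdef, norm_zero, Real.sqrt_zero, add_zero, Prod.fst_zero, Prod.snd_zero,
            norm_zero, mul_zero]
          rw [hd_self]
        · obtain ⟨hq1, hq2⟩ := unit p hp
          have ht : 0 < ρ p := lt_of_le_of_ne (hρnn p) (fun h => hp (hρ0 p h.symm))
          have hmem : (((ρ p : ℝ) : ℂ)⁻¹ • p.1, ((ρ p) ^ 2)⁻¹ • p.2) ∈ S := hq1
          have hle : d 0 (((ρ p : ℝ) : ℂ)⁻¹ • p.1, ((ρ p) ^ 2)⁻¹ • p.2) ≤ d 0 pM := hpM hmem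
          rw [hq2, mul_comm (ρ p)]
          exact mul_le_mul_of_nonneg_right hle ht.le
    · -- the space is trivial
      have hall : ∀ p : E × F, p = 0 := by
        intro p
        by_contra hp
        exact hne ⟨_, (unit p hp).1⟩
      refine ⟨1, one_pos, 1, one_pos, ?_, ?_⟩ <;> intro p <;> rw [hall p]
      · simp only [one_mul, hρdef, Prod.fst_zero, Prod.snd_zero, norm_zero,
          Real.sqrt_zero, add_zero]
        rw [hd_self]
      · simp only [one_mul, hρdef, Prod.fst_zero, Prod.snd_zero, norm_zero,
          Real.sqrt_zero, add_zero]
        rw [hd_self]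
  -- translation to the origin
  have htrans : ∀ a b : E × F, d a b =
      d 0 (b.1 - a.1, b.2 - a.2 + (2 : ℝ) • Φim a.1 0 - (2 : ℝ) • Φim a.1 (b.1 - a.1)) := by
    intro a b
    have h := hd_left (a.1, a.2 - (2 : ℝ) • Φim a.1 0) (0, (0 : F))
      (b.1 - a.1, b.2 - a.2 + (2 : ℝ) • Φim a.1 0 - (2 : ℝ) • Φim a.1 (b.1 - a.1))
    have e1 : heisMul Φim (a.1, a.2 - (2 : ℝ) • Φim a.1 0) ((0 : E), (0 : F)) = a := by
      refine Prod.ext ?_ ?_ <;> simp [heisMul] <;> abel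
    have e2 : heisMul Φim (a.1, a.2 - (2 : ℝ) • Φim a.1 0)
        (b.1 - a.1, b.2 - a.2 + (2 : ℝ) • Φim a.1 0 - (2 : ℝ) • Φim a.1 (b.1 - a.1)) = b := by
      refine Prod.ext ?_ ?_ <;> simp [heisMul] <;> abel
    rw [e1, e2] at h
    simpa only [Prod.mk_zero_zero] using h
  -- the constants
  refine ⟨c₁ / 2, by positivity, 4 * c₂ / c₁, by positivity, ?_⟩
  intro δ R hδ hR J J' xj ζj hF hE
  constructor
  · -- disjointness
    intro p q hpq
    rw [Set.disjoint_left]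
    intro y hy1 hy2
    simp only [Set.mem_setOf_eq] at hy1 hy2
    have hd12 : d (ζj p.2, xj p.1) (ζj q.2, xj q.1) < c₁ * δ := by
      have h1 := hd_tri (ζj p.2, xj p.1) y (ζj q.2, xj q.1)
      have h2 : d y (ζj q.2, xj q.1) = d (ζj q.2, xj q.1) y := hd_symm _ _
      rw [h2] at h1
      linarith
    set w : E × F := (ζj q.2 - ζj p.2,
      xj q.1 - xj p.1 + (2 : ℝ) • Φim (ζj p.2) 0 - (2 : ℝ) • Φim (ζj p.2) (ζj q.2 - ζj p.2))
      with hwdef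
    have hw : d (ζj p.2, xj p.1) (ζj q.2, xj q.1) = d 0 w := htrans _ _
    have hρw : ρ w < δ := by
      have := hlow w
      rw [← hw] at this
      nlinarith
    have h1 : ‖ζj q.2 - ζj p.2‖ < δ := by
      have : ‖w.1‖ + Real.sqrt ‖w.2‖ < δ := hρw
      have h2 := Real.sqrt_nonneg ‖w.2‖
      simp only [hwdef] at this
      linarith
    have hj' : p.2 = q.2 := by
      by_contra hne2
      have hdisj := hE.1 hne2
      obtain ⟨hm1, hm2⟩ := midpoint_mem_balls (ζj p.2) (ζj q.2) δ (by linarith)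
      exact Set.disjoint_left.mp hdisj hm1 hm2
    have hw2 : w.2 = xj q.1 - xj p.1 := by
      simp only [hwdef, hj', sub_self]
      abel
    have h2 : ‖xj q.1 - xj p.1‖ < δ ^ 2 := by
      have hs : Real.sqrt ‖w.2‖ < δ := by
        have : ‖w.1‖ + Real.sqrt ‖w.2‖ < δ := hρw
        linarith [norm_nonneg w.1]
      rw [hw2] at hs
      exact (Real.sqrt_lt' hδ).mp hs
    have hj : p.1 = q.1 := by
      by_contra hne1
      have hdisj := hF.1 hne1
      obtain ⟨hm1, hm2⟩ := midpoint_mem_balls (xj p.1) (xj q.1) (δ ^ 2) (by nlinarith)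
      exact Set.disjoint_left.mp hdisj hm1 hm2
    exact hpq (Prod.ext hj hj')
  · -- covering
    intro y
    obtain ⟨j', hj'⟩ := hE.2 y.1
    set z : F := y.2 + (2 : ℝ) • Φim (ζj j') 0 - (2 : ℝ) • Φim (ζj j') (y.1 - ζj j') with hzdef
    obtain ⟨j, hj⟩ := hF.2 z
    refine ⟨(j, j'), ?_⟩
    have hT := htrans (ζj j', xj j) y
    simp only at hT
    set w : E × F := (y.1 - ζj j',
      y.2 - xj j + (2 : ℝ) • Φim (ζj j') 0 - (2 : ℝ) • Φim (ζj j') (y.1 - ζj j')) with hwdef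
    have hw2 : w.2 = z - xj j := by
      simp only [hwdef, hzdef]; abel
    have hb := hupp w
    have hRδ : 0 < R * δ := by positivity
    have h1 : ‖w.1‖ < R * δ := by
      simp only [hwdef]
      rw [norm_sub_rev]
      simpa [dist_eq_norm] using hj'
    have h2 : Real.sqrt ‖w.2‖ < R * δ := by
      rw [hw2, norm_sub_rev]
      rw [Real.sqrt_lt' hRδ]
      calc ‖xj j - z‖ = dist (xj j) z := (dist_eq_norm _ _).symm
        _ < R ^ 2 * δ ^ 2 := hj
        _ = (R * δ) ^ 2 := by ring
    have hρw : ρ w < 2 * (R * δ) := by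
      have : ρ w = ‖w.1‖ + Real.sqrt ‖w.2‖ := rfl
      linarith [this]
    calc d (ζj j', xj j) y = d 0 w := hT
      _ ≤ c₂ * ρ w := hb
      _ < c₂ * (2 * (R * δ)) := by
          apply mul_lt_mul_of_pos_left hρw hc₂
      _ = 4 * c₂ / c₁ * R * (c₁ / 2 * δ) := by field_simp; ring
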